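/- In blocking Nim with parameter k, write each pile size as q_i·k + r_i with 0 ≤ r_i < k. A position together with a constraint set S ⊆ {1,2,...} of size k−1 is a previous-player win if and only if the XOR of the q_i is zero and {1, ..., max_i r_i} ⊆ S (where max over the empty set is 0). -/

import Mathlib

instance : Std.Commutative (α := ℕ) (· ^^^ ·) := ⟨Nat.xor_comm⟩
instance : Std.Associative (α := ℕ) (· ^^^ ·) := ⟨Nat.xor_assoc⟩

/-- The nim-sum (bitwise XOR) of a finite multiset. -/
def nimSum (s : Multiset ℕ) : ℕ := Multiset.fold (· ^^^ ·) 0 s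

/-- A game state of blocking Nim: a multiset of pile sizes together with the
current constraint set of forbidden removal amounts. -/
abbrev BState := Multiset ℕ × Finset ℕ

/-- A move in blocking Nim with parameter `k`: remove from one pile a positive
number of counters not in the current constraint set, then name a new
constraint set of `k - 1` positive integers. -/
def BMove (k : ℕ) (p q : BState) : Prop :=
  ∃ a ∈ p.1, ∃ b < a, (a - b) ∉ p.2 ∧ q.1 = b ::ₘ p.1.erase a ∧
    q.2.card = k - 1 ∧ 0 ∉ q.2

mutual
/-- Previous-player win in blocking Nim: every move leads to a next-player win. -/
inductive BP (k : ℕ) : BState → Prop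
  | mk (p : BState) : (∀ q, BMove k p q → BN k q) → BP k p

/-- Next-player win in blocking Nim: some move leads to a previous-player win. -/
inductive BN (k : ℕ) : BState → Prop
  | mk (p q : BState) : BMove k p q → BP k q → BN k p
end

/- ---------------- auxiliary material ---------------- -/

lemma nimSum_cons (a : ℕ) (m : Multiset ℕ) : nimSum (a ::ₘ m) = a ^^^ nimSum m :=
  Multiset.fold_cons_left _ _ _ _

lemma nimSum_testBit_false (m : Multiset ℕ) (i : ℕ)
    (h : ∀ x ∈ m, x.testBit i = false) : (nimSum m).testBit i = false := by
  induction m using Multiset.induction with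
  | empty => simp [nimSum]
  | cons a mm ih =>
    rw [nimSum_cons, Nat.testBit_xor, h a (Multiset.mem_cons_self a mm),
      ih (fun x hx => h x (Multiset.mem_cons_of_mem hx))]
    rfl

lemma exists_xor_lt (m : Multiset ℕ) (h : nimSum m ≠ 0) :
    ∃ q ∈ m, q ^^^ nimSum m < q := by
  obtain ⟨i, hi, hi'⟩ := Nat.exists_most_significant_bit h
  by_cases hq : ∀ x ∈ m, x.testBit i = false
  · rw [nimSum_testBit_false m i hq] at hi; exact absurd hi (by simp)
  push_neg at hq
  obtain ⟨q, hqm, hqt⟩ := hq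
  have hqt' : q.testBit i = true := by simpa using hqt
  refine ⟨q, hqm, Nat.lt_of_testBit i ?_ hqt' ?_⟩
  · rw [Nat.testBit_xor, hqt', hi]; decide
  · intro j hj; rw [Nat.testBit_xor, hi' j hj, Bool.xor_false]

/-- The winning condition of blocking Nim. -/
def BCond (k : ℕ) (s : Multiset ℕ) (S : Finset ℕ) : Prop :=
  nimSum (s.map (· / k)) = 0 ∧
    ∀ j : ℕ, 0 < j → j ≤ (s.map (· % k)).sup → j ∈ S

lemma rem_sup_le (k : ℕ) (hk : 1 ≤ k) (s : Multiset ℕ) :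
    (s.map (· % k)).sup ≤ k - 1 := by
  refine Multiset.sup_le.2 fun b hb => ?_
  obtain ⟨a, _, rfl⟩ := Multiset.mem_map.1 hb
  have := Nat.mod_lt a (show 0 < k from hk)
  omega

lemma icc_card (k : ℕ) : (Finset.Icc 1 (k - 1)).card = k - 1 := by
  rw [Nat.card_Icc]; omega

lemma icc_pos (k : ℕ) : ∀ j ∈ Finset.Icc 1 (k - 1), 0 < j := by
  intro j hj; have := (Finset.mem_Icc.1 hj).1; omega

lemma zero_not_mem_icc (k : ℕ) : 0 ∉ Finset.Icc 1 (k - 1) := by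
  simp

lemma bcond_icc (k : ℕ) (hk : 1 ≤ k) (m : Multiset ℕ)
    (h : nimSum (m.map (· / k)) = 0) : BCond k m (Finset.Icc 1 (k - 1)) := by
  refine ⟨h, fun j hj hj' => Finset.mem_Icc.2 ⟨hj, ?_⟩⟩
  exact le_trans hj' (rem_sup_le k hk m)

lemma sum_erase_lt {s : Multiset ℕ} {a b : ℕ} (ha : a ∈ s) (hb : b < a) :
    (b ::ₘ s.erase a).sum < s.sum := by
  have h1 : s.sum = a + (s.erase a).sum := by
    conv_lhs => rw [← Multiset.cons_erase ha]
    rw [Multiset.sum_cons]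
  rw [Multiset.sum_cons]
  omega

lemma key (k : ℕ) (hk : 1 ≤ k) : ∀ n (s : Multiset ℕ) (S : Finset ℕ), s.sum = n →
    S.card = k - 1 → (∀ j ∈ S, 0 < j) →
    (BCond k s S → BP k (s, S)) ∧ (¬ BCond k s S → BN k (s, S)) := by
  intro n
  induction n using Nat.strong_induction_on with
  | _ n ih =>
  intro s S hsum hcard hpos
  constructor
  · -- BCond → BP
    rintro ⟨hX, hR⟩
    refine BP.mk _ (fun q hq => ?_)
    obtain ⟨a, ha0, b, hb, hnot0, hq10, hqcard, hq0⟩ := hq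
    have ha : a ∈ s := ha0
    have hnot : a - b ∉ S := hnot0
    have hq1 : q.1 = b ::ₘ s.erase a := hq10
    have hsum2 : (b ::ₘ s.erase a).sum < n := hsum ▸ sum_erase_lt ha hb
    have hXeq : nimSum (s.map (· / k)) =
        (a / k) ^^^ nimSum ((s.erase a).map (· / k)) := by
      conv_lhs => rw [← Multiset.cons_erase ha]
      rw [Multiset.map_cons, nimSum_cons]
    have hnc : ¬ BCond k (b ::ₘ s.erase a) q.2 := by
      rintro ⟨hX', _⟩
      rw [Multiset.map_cons, nimSum_cons] at hX'
      rw [hXeq] at hX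
      have hdiv : a / k = b / k := by
        have h1 := Nat.xor_eq_zero_iff.1 hX
        have h2 := Nat.xor_eq_zero_iff.1 hX'
        omega
      -- then the removal amount is a % k - b % k ≤ a % k ≤ sup
      have h1 := Nat.div_add_mod a k
      have h2 := Nat.div_add_mod b k
      rw [hdiv] at h1
      have hmem : a - b ∈ S := by
        apply hR
        · omega
        · have hsup : a % k ≤ (s.map (· % k)).sup :=
            Multiset.le_sup (Multiset.mem_map.2 ⟨a, ha, rfl⟩)
          have : a - b ≤ a % k := by
            generalize k * (b / k) = c at h1 h2
            omega
          omega
      exact hnot hmem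
    have hres := (ih _ hsum2 (b ::ₘ s.erase a) q.2 rfl hqcard
      (fun j hj => Nat.pos_of_ne_zero (fun h0 => hq0 (h0 ▸ hj)))).2 hnc
    have heq : ((b ::ₘ s.erase a), q.2) = q := by
      rw [← hq1]
    rwa [heq] at hres
  · -- ¬ BCond → BN
    intro hnc
    by_cases hX : nimSum (s.map (· / k)) = 0
    · -- remainder condition fails
      have : ∃ j : ℕ, 0 < j ∧ j ≤ (s.map (· % k)).sup ∧ j ∉ S := by
        by_contra hc
        push_neg at hc
        exact hnc ⟨hX, fun j hj hj' => hc j hj hj'⟩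
      obtain ⟨j, hj0, hjsup, hjS⟩ := this
      -- find a pile realizing the sup
      have hex : ∃ a ∈ s, (s.map (· % k)).sup ≤ a % k := by
        by_contra hcc
        push_neg at hcc
        have hle : (s.map (· % k)).sup ≤ (s.map (· % k)).sup - 1 := by
          refine Multiset.sup_le.2 fun bb hbb => ?_
          obtain ⟨a, ha, rfl⟩ := Multiset.mem_map.1 hbb
          have := hcc a ha
          omega
        omega
      obtain ⟨a, ha, hamod⟩ := hex
      have hja : j ≤ a % k := le_trans hjsup hamod
      have hmodle : a % k ≤ a := Nat.mod_le a k
      set b := a - j with hbdef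
      have hba : b < a := by omega
      have hmove : BMove k (s, S) ((b ::ₘ s.erase a), Finset.Icc 1 (k - 1)) := by
        refine ⟨a, ha, b, hba, ?_, rfl, icc_card k, zero_not_mem_icc k⟩
        have : a - b = j := by omega
        rw [this]; exact hjS
      have hbd : b / k = a / k := by
        have h1 := Nat.div_add_mod a k
        have hb' : b = k * (a / k) + (a % k - j) := by omega
        have hlt2 : (a % k - j) / k = 0 :=
          Nat.div_eq_of_lt (by have := Nat.mod_lt a (show 0 < k from hk); omega)
        rw [hb', Nat.mul_add_div (show 0 < k from hk) (a / k) (a % k - j), hlt2]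
        omega
      have hXnew : nimSum ((b ::ₘ s.erase a).map (· / k)) = 0 := by
        have hXeq : nimSum (s.map (· / k)) =
            (a / k) ^^^ nimSum ((s.erase a).map (· / k)) := by
          conv_lhs => rw [← Multiset.cons_erase ha]
          rw [Multiset.map_cons, nimSum_cons]
        rw [Multiset.map_cons, nimSum_cons, hbd]
        rw [hXeq] at hX
        exact hX
      have hsum2 : (b ::ₘ s.erase a).sum < n := hsum ▸ sum_erase_lt ha hba
      have hbp := (ih _ hsum2 (b ::ₘ s.erase a) (Finset.Icc 1 (k - 1)) rfl
        (icc_card k) (icc_pos k)).1 (bcond_icc k hk _ hXnew)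
      exact BN.mk _ _ hmove hbp
    · -- nim-sum nonzero
      obtain ⟨q', hq'mem, hq'lt⟩ := exists_xor_lt _ hX
      obtain ⟨a, ha, hadiv⟩ := Multiset.mem_map.1 hq'mem
      set X := nimSum (s.map (· / k)) with hXdef
      set Qs := (a / k) ^^^ X with hQsdef
      rw [← hadiv] at hq'lt
      have hQslt : Qs < a / k := hq'lt
      have hmul : k * (Qs + 1) ≤ k * (a / k) := Nat.mul_le_mul_left k hQslt
      have h1 := Nat.div_add_mod a k
      have hlt : ∀ t < k, k * Qs + t < a := by
        intro t ht
        have : k * (Qs + 1) = k * Qs + k := by ring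
        omega
      -- find a removal amount not in S
      have hext : ∃ t < k, a - (k * Qs + t) ∉ S := by
        by_contra hall
        push_neg at hall
        have hss : (Finset.range k).image (fun t => a - (k * Qs + t)) ⊆ S := by
          intro x hx
          obtain ⟨t, ht, rfl⟩ := Finset.mem_image.1 hx
          exact hall t (Finset.mem_range.1 ht)
        have hcardim : ((Finset.range k).image (fun t => a - (k * Qs + t))).card = k := by
          rw [Finset.card_image_of_injOn, Finset.card_range]
          intro x hx y hy hxy
          simp only [Finset.coe_range, Set.mem_Iio] at hx hy
          have hx' := hlt x hx
          have hy' := hlt y hy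
          simp only at hxy
          omega
        have := Finset.card_le_card hss
        rw [hcardim, hcard] at this
        omega
      obtain ⟨t, ht, htS⟩ := hext
      set b := k * Qs + t with hbdef
      have hba : b < a := hlt t ht
      have hmove : BMove k (s, S) ((b ::ₘ s.erase a), Finset.Icc 1 (k - 1)) :=
        ⟨a, ha, b, hba, htS, rfl, icc_card k, zero_not_mem_icc k⟩
      have hbd : b / k = Qs := by
        have hlt2 : t / k = 0 := Nat.div_eq_of_lt ht
        rw [hbdef, Nat.mul_add_div (show 0 < k from hk) Qs t, hlt2]
        omega
      have hXeq : X = (a / k) ^^^ nimSum ((s.erase a).map (· / k)) := by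
        rw [hXdef]
        conv_lhs => rw [← Multiset.cons_erase ha]
        rw [Multiset.map_cons, nimSum_cons]
      have hQsR : Qs = nimSum ((s.erase a).map (· / k)) := by
        rw [hQsdef, hXeq, ← Nat.xor_assoc, Nat.xor_self, Nat.zero_xor]
      have hXnew : nimSum ((b ::ₘ s.erase a).map (· / k)) = 0 := by
        rw [Multiset.map_cons, nimSum_cons, hbd, hQsR, Nat.xor_self]
      have hsum2 : (b ::ₘ s.erase a).sum < n := hsum ▸ sum_erase_lt ha hba
      have hbp := (ih _ hsum2 (b ::ₘ s.erase a) (Finset.Icc 1 (k - 1)) rfl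
        (icc_card k) (icc_pos k)).1 (bcond_icc k hk _ hXnew)
      exact BN.mk _ _ hmove hbp

lemma notboth (k : ℕ) : ∀ n (p : BState), p.1.sum = n → BP k p → BN k p → False := by
  intro n
  induction n using Nat.strong_induction_on with
  | _ n ih =>
  intro p hsum hp hn
  obtain ⟨_, q, hq, hqp⟩ := hn
  cases hp with
  | mk _ h =>
    have hqn := h q hq
    obtain ⟨a, ha, b, hb, _, hq1, _, _⟩ := hq
    have hlt : q.1.sum < n := by
      rw [hq1]
      exact hsum ▸ sum_erase_lt ha hb
    exact ih _ hlt q rfl hqp hqn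

/-- Solution of blocking Nim: writing each pile size as `qᵢ·k + rᵢ` with
`0 ≤ rᵢ < k`, a position with constraint set `S` (of `k - 1` positive
integers) is a previous-player win iff the XOR of the quotients `qᵢ` is zero
and every number from `1` up to the maximum remainder belongs to `S`. -/
theorem stmt9 (k : ℕ) (hk : 1 ≤ k) (s : Multiset ℕ) (S : Finset ℕ)
    (hcard : S.card = k - 1) (hpos : ∀ j ∈ S, 0 < j) :
    BP k (s, S) ↔
      nimSum (s.map (· / k)) = 0 ∧
      ∀ j : ℕ, 0 < j → j ≤ (s.map (· % k)).sup → j ∈ S := by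
  have hiff : (nimSum (s.map (· / k)) = 0 ∧
      ∀ j : ℕ, 0 < j → j ≤ (s.map (· % k)).sup → j ∈ S) ↔ BCond k s S := Iff.rfl
  rw [hiff]
  constructor
  · intro hp
    by_contra hnc
    exact notboth k _ (s, S) rfl hp ((key k hk _ s S rfl hcard hpos).2 hnc)
  · intro hc
    exact (key k hk _ s S rfl hcard hpos).1 hc
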